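/- Suppose ν is even, P = Pᵀ, C is symmetric negative definite, and −q_i Q ⪯ C for every i. Define A_{ν/2,ν/2}(z) := (P^{ν/2} ⊗ I_n) x⋆((P^{ν/2} ⊗ I_n) z). Then for any initial vector z_0 ∈ ℝ^{Nn}, the Picard–Banach iteration z_{k+1} := A_{ν/2,ν/2}(z_k) is such that the sequence a_k := (P^{ν/2} ⊗ I_n) z_k converges as k → ∞ to a fixed point of A_ν. (Theorem 3, statement 3.) -/

import Mathlib

open Matrix Filter Topology Finset
open scoped Kronecker

noncomputable section

/-- Euclidean norm of a finitely-indexed real vector. -/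
def eunorm {ι : Type*} [Fintype ι] (x : ι → ℝ) : ℝ := Real.sqrt (x ⬝ᵥ x)

/-- `S`-weighted norm `‖x‖_S = √(xᵀ S x)`. -/
def wnorm {ι : Type*} [Fintype ι] (S : Matrix ι ι ℝ) (x : ι → ℝ) : ℝ :=
  Real.sqrt (x ⬝ᵥ S.mulVec x)

/-- Quadratic cost `J(x,z) = q·xᵀQx + 2(Cz+c)ᵀx`. -/
def cost {n : ℕ} (Q C : Matrix (Fin n) (Fin n) ℝ) (qi : ℝ) (ci : Fin n → ℝ)
    (x z : Fin n → ℝ) : ℝ :=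
  qi * (x ⬝ᵥ Q.mulVec x) + 2 * ((C.mulVec z + ci) ⬝ᵥ x)

/-- `xst` is the optimal-response map: for every `z`, `xst z` minimizes the cost over `X`. -/
def IsOptResp {n : ℕ} (X : Set (Fin n → ℝ)) (Q C : Matrix (Fin n) (Fin n) ℝ)
    (qi : ℝ) (ci : Fin n → ℝ) (xst : (Fin n → ℝ) → (Fin n → ℝ)) : Prop :=
  ∀ z, xst z ∈ X ∧ ∀ y ∈ X, cost Q C qi ci (xst z) z ≤ cost Q C qi ci y z

/-- Stacked optimal responses `x⋆(z) = (x^{1⋆}(z^1);…;x^{N⋆}(z^N))`. -/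
def extMap {n N : ℕ} (xstar : Fin N → (Fin n → ℝ) → (Fin n → ℝ))
    (z : Fin N × Fin n → ℝ) : Fin N × Fin n → ℝ :=
  fun p => xstar p.1 (fun j => z (p.1, j)) p.2

/-- Extended aggregation map `A_ν(z) = (P^ν ⊗ I_n) x⋆(z)`. -/
def aggMap {n N : ℕ} (P : Matrix (Fin N) (Fin N) ℝ) (ν : ℕ)
    (xstar : Fin N → (Fin n → ℝ) → (Fin n → ℝ)) (z : Fin N × Fin n → ℝ) :
    Fin N × Fin n → ℝ :=
  ((P ^ ν) ⊗ₖ (1 : Matrix (Fin n) (Fin n) ℝ)).mulVec (extMap xstar z)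

/-- The matrix `(1/N)·1_N 1_Nᵀ` with all entries `1/N`. -/
def avgMat (N : ℕ) : Matrix (Fin N) (Fin N) ℝ := Matrix.of fun _ _ => (N : ℝ)⁻¹

/-- Mean-field aggregation map `A(z) = ((1/N)·1 1ᵀ ⊗ I_n) x⋆(z)`. -/
def meanAgg {n N : ℕ} (xstar : Fin N → (Fin n → ℝ) → (Fin n → ℝ))
    (z : Fin N × Fin n → ℝ) : Fin N × Fin n → ℝ :=
  ((avgMat N) ⊗ₖ (1 : Matrix (Fin n) (Fin n) ℝ)).mulVec (extMap xstar z)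

/-- Maximum-row-sum matrix norm `‖A‖_∞`. -/
def rowSumNorm {N : ℕ} (A : Matrix (Fin N) (Fin N) ℝ) : ℝ := ⨆ i, ∑ j, |A i j|

/-- Spectral norm (ℓ²-operator norm) of a real matrix. -/
def specNorm {ι : Type*} [Fintype ι] [DecidableEq ι] (P : Matrix ι ι ℝ) : ℝ :=
  ‖LinearMap.toContinuousLinearMap (Matrix.toEuclideanLin P)‖

/-- Map `A_{m,m}(z) = (P^m ⊗ I_n) x⋆((P^m ⊗ I_n) z)`. -/
def halfAgg {n N : ℕ} (P : Matrix (Fin N) (Fin N) ℝ) (m : ℕ)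
    (xstar : Fin N → (Fin n → ℝ) → (Fin n → ℝ)) (z : Fin N × Fin n → ℝ) :
    Fin N × Fin n → ℝ :=
  ((P ^ m) ⊗ₖ (1 : Matrix (Fin n) (Fin n) ℝ)).mulVec
    (extMap xstar (((P ^ m) ⊗ₖ (1 : Matrix (Fin n) (Fin n) ℝ)).mulVec z))

open scoped NNReal

namespace PBaux


lemma dot_mulVec_left {ι : Type*} [Fintype ι] (A : Matrix ι ι ℝ) (u w : ι → ℝ) :
    A.mulVec u ⬝ᵥ w = u ⬝ᵥ Aᵀ.mulVec w := by
  rw [dotProduct_comm, dotProduct_mulVec, dotProduct_comm, Matrix.mulVec_transpose]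

lemma kron_one_mulVec {N n : ℕ} (A : Matrix (Fin N) (Fin N) ℝ) (w : Fin N × Fin n → ℝ)
    (i : Fin N) (j : Fin n) :
    ((A ⊗ₖ (1 : Matrix (Fin n) (Fin n) ℝ)).mulVec w) (i, j)
      = A.mulVec (fun i' => w (i', j)) i := by
  simp only [Matrix.mulVec, dotProduct, Fintype.sum_prod_type,
    Matrix.kroneckerMap_apply, Matrix.one_apply, mul_ite, mul_one, mul_zero, ite_mul, zero_mul]
  simp [Finset.sum_ite_eq]

lemma one_kron_mulVec {N n : ℕ} (S : Matrix (Fin n) (Fin n) ℝ) (v : Fin N × Fin n → ℝ)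
    (i : Fin N) (j : Fin n) :
    (((1 : Matrix (Fin N) (Fin N) ℝ) ⊗ₖ S).mulVec v) (i, j)
      = S.mulVec (fun j' => v (i, j')) j := by
  simp only [Matrix.mulVec, dotProduct, Fintype.sum_prod_type,
    Matrix.kroneckerMap_apply, Matrix.one_apply, ite_mul, one_mul, zero_mul]
  simp [Finset.sum_ite_eq]

lemma blockDot {N n : ℕ} (S : Matrix (Fin n) (Fin n) ℝ) (u v : Fin N × Fin n → ℝ) :
    u ⬝ᵥ (((1 : Matrix (Fin N) (Fin N) ℝ) ⊗ₖ S).mulVec v)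
      = ∑ i, (fun j => u (i, j)) ⬝ᵥ S.mulVec (fun j' => v (i, j')) := by
  simp only [dotProduct, Fintype.sum_prod_type]
  refine Finset.sum_congr rfl fun i _ => Finset.sum_congr rfl fun j _ => ?_
  rw [one_kron_mulVec]



lemma stoch_nonexp {N : ℕ} (P : Matrix (Fin N) (Fin N) ℝ) (hPnn : ∀ i j, 0 ≤ P i j)
    (hrow : ∀ i, ∑ j, P i j = 1) (hcol : ∀ j, ∑ i, P i j = 1) (v : Fin N → ℝ) :
    P.mulVec v ⬝ᵥ P.mulVec v ≤ v ⬝ᵥ v := by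
  have key : ∀ i, (P.mulVec v i) ^ 2 ≤ ∑ j, P i j * (v j) ^ 2 := by
    intro i
    have h := Finset.sum_mul_sq_le_sq_mul_sq Finset.univ
      (fun j => Real.sqrt (P i j)) (fun j => Real.sqrt (P i j) * v j)
    have h1 : ∀ j, Real.sqrt (P i j) * (Real.sqrt (P i j) * v j) = P i j * v j := by
      intro j; rw [← mul_assoc, Real.mul_self_sqrt (hPnn i j)]
    have h2 : ∀ j, Real.sqrt (P i j) ^ 2 = P i j := fun j => Real.sq_sqrt (hPnn i j)
    have h3 : ∀ j, (Real.sqrt (P i j) * v j) ^ 2 = P i j * (v j) ^ 2 := by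
      intro j; rw [mul_pow, h2]
    simp only [h1, h3] at h
    calc (P.mulVec v i) ^ 2 = (∑ j, P i j * v j) ^ 2 := by rfl
      _ ≤ (∑ j, P i j) * ∑ j, P i j * (v j) ^ 2 := by simpa only [h2] using h
      _ = ∑ j, P i j * (v j) ^ 2 := by rw [hrow i, one_mul]
  calc P.mulVec v ⬝ᵥ P.mulVec v = ∑ i, (P.mulVec v i) ^ 2 := by
        simp [dotProduct, sq]
    _ ≤ ∑ i, ∑ j, P i j * (v j) ^ 2 := Finset.sum_le_sum fun i _ => key i
    _ = ∑ j, (∑ i, P i j) * (v j) ^ 2 := by rw [Finset.sum_comm]; simp [Finset.sum_mul]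
    _ = v ⬝ᵥ v := by simp [hcol, dotProduct, sq]

lemma pow_stoch_nonexp {N : ℕ} (P : Matrix (Fin N) (Fin N) ℝ) (hPnn : ∀ i j, 0 ≤ P i j)
    (hrow : ∀ i, ∑ j, P i j = 1) (hcol : ∀ j, ∑ i, P i j = 1) (m : ℕ) (v : Fin N → ℝ) :
    (P ^ m).mulVec v ⬝ᵥ (P ^ m).mulVec v ≤ v ⬝ᵥ v := by
  induction m generalizing v with
  | zero => simp [Matrix.one_mulVec]
  | succ m ih =>
      have : (P ^ (m + 1)).mulVec v = (P ^ m).mulVec (P.mulVec v) := by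
        rw [pow_succ, ← Matrix.mulVec_mulVec]
      rw [this]
      exact le_trans (ih (P.mulVec v)) (stoch_nonexp P hPnn hrow hcol v)

lemma kron_one_nonexp {N n : ℕ} (A : Matrix (Fin N) (Fin N) ℝ)
    (hA : ∀ v : Fin N → ℝ, A.mulVec v ⬝ᵥ A.mulVec v ≤ v ⬝ᵥ v) (w : Fin N × Fin n → ℝ) :
    (A ⊗ₖ (1 : Matrix (Fin n) (Fin n) ℝ)).mulVec w ⬝ᵥ
      (A ⊗ₖ (1 : Matrix (Fin n) (Fin n) ℝ)).mulVec w ≤ w ⬝ᵥ w := by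
  have lhs : (A ⊗ₖ (1 : Matrix (Fin n) (Fin n) ℝ)).mulVec w ⬝ᵥ
      (A ⊗ₖ (1 : Matrix (Fin n) (Fin n) ℝ)).mulVec w
      = ∑ j, A.mulVec (fun i' => w (i', j)) ⬝ᵥ A.mulVec (fun i' => w (i', j)) := by
    simp only [dotProduct, Fintype.sum_prod_type, kron_one_mulVec]
    exact Finset.sum_comm
  have rhs : w ⬝ᵥ w = ∑ j, (fun i' => w (i', j)) ⬝ᵥ (fun i' => w (i', j)) := by
    simp only [dotProduct, Fintype.sum_prod_type]
    exact Finset.sum_comm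
  rw [lhs, rhs]
  exact Finset.sum_le_sum fun j _ => hA _

end PBaux

namespace PBaux

lemma pos_of_linear_quad {a b : ℝ} (hb : 0 ≤ b)
    (h : ∀ t : ℝ, 0 < t → t ≤ 1 → 0 ≤ t * a + t ^ 2 * b) : 0 ≤ a := by
  by_contra ha
  push_neg at ha
  set t := min 1 (-a / (2 * (b + 1))) with ht
  have hbpos : (0:ℝ) < 2 * (b + 1) := by linarith
  have ht0 : 0 < t := lt_min one_pos (div_pos (by linarith) hbpos)
  have ht1 : t ≤ 1 := min_le_left _ _
  have ht2 : t ≤ -a / (2 * (b + 1)) := min_le_right _ _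
  have htb : t * b ≤ -a / 2 := by
    have h1 : t * b ≤ (-a / (2 * (b + 1))) * b :=
      mul_le_mul_of_nonneg_right ht2 hb
    have h2 : (-a / (2 * (b + 1))) * b ≤ -a / 2 := by
      rw [div_mul_eq_mul_div, div_le_div_iff₀ hbpos two_pos]
      nlinarith
    linarith
  have := h t ht0 ht1
  nlinarith

variable {n : ℕ}

lemma dotQ_symm {Q : Matrix (Fin n) (Fin n) ℝ} (hQsym : Qᵀ = Q) (u w : Fin n → ℝ) :
    u ⬝ᵥ Q.mulVec w = w ⬝ᵥ Q.mulVec u := by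
  have h1 : Q.mulVec u ⬝ᵥ w = u ⬝ᵥ Qᵀ.mulVec w := by
    rw [dotProduct_comm, dotProduct_mulVec, dotProduct_comm, Matrix.mulVec_transpose]
  rw [hQsym] at h1
  rw [← h1, dotProduct_comm]

lemma opt_vi {X : Set (Fin n → ℝ)} (hXconv : Convex ℝ X)
    {Q C : Matrix (Fin n) (Fin n) ℝ} (hQsym : Qᵀ = Q) (hQpsd : Q.PosSemidef)
    {qi : ℝ} (hqi : 0 < qi) (ci : Fin n → ℝ)
    {xst : (Fin n → ℝ) → (Fin n → ℝ)} (hopt : IsOptResp X Q C qi ci xst)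
    (z y : Fin n → ℝ) (hy : y ∈ X) :
    0 ≤ qi * (xst z ⬝ᵥ Q.mulVec (y - xst z)) + (C.mulVec z + ci) ⬝ᵥ (y - xst z) := by
  set x := xst z with hx
  have hxX : x ∈ X := (hopt z).1
  have hsym : ∀ u w : Fin n → ℝ, u ⬝ᵥ Q.mulVec w = w ⬝ᵥ Q.mulVec u := dotQ_symm hQsym
  have key : ∀ t : ℝ, 0 < t → t ≤ 1 →
      0 ≤ t * (2 * (qi * (x ⬝ᵥ Q.mulVec (y - x)) + (C.mulVec z + ci) ⬝ᵥ (y - x)))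
        + t ^ 2 * (qi * ((y - x) ⬝ᵥ Q.mulVec (y - x))) := by
    intro t ht0 ht1
    have hmem : x + t • (y - x) ∈ X := by
      have h := hXconv hxX hy (by linarith : (0:ℝ) ≤ 1 - t) (le_of_lt ht0) (by ring)
      have he : (1 - t) • x + t • y = x + t • (y - x) := by module
      rwa [he] at h
    have hle := (hopt z).2 _ hmem
    have hexp : cost Q C qi ci (x + t • (y - x)) z = cost Q C qi ci x z
        + (t * (2 * (qi * (x ⬝ᵥ Q.mulVec (y - x)) + (C.mulVec z + ci) ⬝ᵥ (y - x)))
          + t ^ 2 * (qi * ((y - x) ⬝ᵥ Q.mulVec (y - x)))) := by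
      simp only [cost, Matrix.mulVec_add, Matrix.mulVec_smul, dotProduct_add, add_dotProduct,
        dotProduct_smul, smul_dotProduct, smul_eq_mul]
      linear_combination (qi * t) * hsym (y - x) x
    rw [hexp] at hle
    linarith
  have h0 := pos_of_linear_quad (by
      have := hQpsd.dotProduct_mulVec_nonneg (y - x)
      simp only [star_trivial] at this
      positivity) key
  linarith

lemma block_fne {X : Set (Fin n → ℝ)} (hXconv : Convex ℝ X)
    {Q C : Matrix (Fin n) (Fin n) ℝ} (hQsym : Qᵀ = Q) (hQpsd : Q.PosSemidef)
    {qi : ℝ} (hqi : 0 < qi) (hqQC : (qi • Q + C).PosSemidef) (ci : Fin n → ℝ)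
    {xst : (Fin n → ℝ) → (Fin n → ℝ)} (hopt : IsOptResp X Q C qi ci xst)
    (z1 z2 : Fin n → ℝ) :
    (xst z1 - xst z2) ⬝ᵥ (-C).mulVec (xst z1 - xst z2)
      ≤ (xst z1 - xst z2) ⬝ᵥ (-C).mulVec (z1 - z2) := by
  have h1 := opt_vi hXconv hQsym hQpsd hqi ci hopt z1 (xst z2) (hopt z2).1
  have h2 := opt_vi hXconv hQsym hQpsd hqi ci hopt z2 (xst z1) (hopt z1).1
  have hq := (hqQC).dotProduct_mulVec_nonneg (xst z1 - xst z2)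
  simp only [star_trivial] at hq
  set x1 := xst z1
  set x2 := xst z2
  simp only [Matrix.mulVec_sub, Matrix.mulVec_add, Matrix.add_mulVec, Matrix.neg_mulVec,
    Matrix.smul_mulVec, dotProduct_sub, sub_dotProduct, dotProduct_add, add_dotProduct,
    dotProduct_neg, neg_dotProduct, dotProduct_smul, smul_eq_mul, mul_sub, mul_add] at h1 h2 hq ⊢
  have hc11 : C.mulVec z1 ⬝ᵥ x1 = x1 ⬝ᵥ C.mulVec z1 := dotProduct_comm _ _
  have hc12 : C.mulVec z1 ⬝ᵥ x2 = x2 ⬝ᵥ C.mulVec z1 := dotProduct_comm _ _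
  have hc21 : C.mulVec z2 ⬝ᵥ x1 = x1 ⬝ᵥ C.mulVec z2 := dotProduct_comm _ _
  have hc22 : C.mulVec z2 ⬝ᵥ x2 = x2 ⬝ᵥ C.mulVec z2 := dotProduct_comm _ _
  have hQm : qi * (x2 ⬝ᵥ Q.mulVec x1) = qi * (x1 ⬝ᵥ Q.mulVec x2) := by
    rw [dotQ_symm hQsym x2 x1]
  linarith

end PBaux

namespace PBaux

variable {ι : Type*} [Fintype ι]

local notation "E" => EuclideanSpace ℝ ι

lemma fne_nonexpansive (T : E → E)
    (hfne : ∀ x y : E, ‖T x - T y‖ ^ 2 ≤ inner ℝ (T x - T y) (x - y)) :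
    ∀ x y : E, ‖T x - T y‖ ≤ ‖x - y‖ := by
  intro x y
  have h := hfne x y
  have hcs : (inner ℝ (T x - T y) (x - y) : ℝ) ≤ ‖T x - T y‖ * ‖x - y‖ :=
    real_inner_le_norm _ _
  rcases eq_or_lt_of_le (norm_nonneg (T x - T y)) with h0 | h0
  · rw [← h0]; exact norm_nonneg _
  · nlinarith

lemma fne_lipschitz (T : E → E)
    (hfne : ∀ x y : E, ‖T x - T y‖ ^ 2 ≤ inner ℝ (T x - T y) (x - y)) :
    LipschitzWith 1 T := by
  refine LipschitzWith.of_dist_le_mul fun x y => ?_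
  rw [dist_eq_norm, dist_eq_norm, NNReal.coe_one, one_mul]
  exact fne_nonexpansive T hfne x y

lemma exists_fixed_of_bounded (T : E → E) (hT : LipschitzWith 1 T)
    (ρ : ℝ) (hρ : ∀ u, ‖T u‖ ≤ ρ) : ∃ w : E, T w = w := by
  have hρ0 : 0 ≤ ρ := le_trans (norm_nonneg _) (hρ 0)
  -- for each k, a fixed point of the contraction (1 - 1/(k+2)) • T
  have hfix : ∀ k : ℕ, ∃ x : E, (1 - 1/((k:ℝ)+2)) • T x = x := by
    intro k
    set c : ℝ := 1 - 1/((k:ℝ)+2) with hc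
    have hk2 : (0:ℝ) < (k:ℝ) + 2 := by positivity
    have hc0 : 0 ≤ c := by
      rw [hc, sub_nonneg, div_le_one hk2]; linarith
    have hc1 : c < 1 := by
      rw [hc]
      have : 0 < 1/((k:ℝ)+2) := by positivity
      linarith
    have hlip : LipschitzWith (‖c‖₊ * 1) (fun x => c • T x) :=
      (lipschitzWith_smul c).comp hT
    have hnn : (‖c‖₊ * 1 : ℝ≥0) = c.toNNReal := by
      rw [mul_one]
      ext
      simp [Real.norm_of_nonneg hc0, Real.coe_toNNReal c hc0]
    rw [hnn] at hlip
    have hcontr : ContractingWith c.toNNReal (fun x => c • T x) := by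
      constructor
      · rw [← NNReal.coe_lt_coe, Real.coe_toNNReal c hc0]; exact hc1
      · exact hlip
    obtain ⟨y, hy, -⟩ := hcontr.exists_fixedPoint (0 : E) (edist_ne_top _ _)
    exact ⟨y, hy⟩
  choose x hx using hfix
  have hmem : ∀ k, x k ∈ Metric.closedBall (0 : E) ρ := by
    intro k
    rw [Metric.mem_closedBall, dist_zero_right, ← hx k]
    have hk2 : (0:ℝ) < (k:ℝ) + 2 := by positivity
    have hc0 : 0 ≤ 1 - 1/((k:ℝ)+2) := by
      rw [sub_nonneg, div_le_one hk2]; linarith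
    rw [norm_smul, Real.norm_of_nonneg hc0]
    calc (1 - 1/((k:ℝ)+2)) * ‖T (x k)‖ ≤ 1 * ρ := by
          apply mul_le_mul ?_ (hρ _) (norm_nonneg _) zero_le_one
          have : 0 < 1/((k:ℝ)+2) := by positivity
          linarith
      _ = ρ := one_mul ρ
  obtain ⟨w, -, φ, hφ, hconv⟩ :=
    (isCompact_closedBall (0:E) ρ).tendsto_subseq hmem
  refine ⟨w, ?_⟩
  have hTconv : Tendsto (fun j => T (x (φ j))) atTop (𝓝 (T w)) :=
    (hT.continuous.tendsto w).comp hconv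
  have hdiff : Tendsto (fun j => x (φ j) - T (x (φ j))) atTop (𝓝 0) := by
    apply squeeze_zero_norm (a := fun j => (1/((φ j:ℝ)+2)) * ρ)
    · intro j
      nth_rewrite 1 [← hx (φ j)]
      have : (1 - 1/((φ j:ℝ)+2)) • T (x (φ j)) - T (x (φ j))
          = (-(1/((φ j:ℝ)+2))) • T (x (φ j)) := by
        module
      rw [this, norm_smul, Real.norm_eq_abs, abs_neg, abs_of_nonneg (by positivity)]
      exact mul_le_mul_of_nonneg_left (hρ _) (by positivity)
    · have h2 : Tendsto (fun m : ℕ => ((m:ℝ)+2)) atTop atTop :=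
        tendsto_atTop_add_const_right _ 2 tendsto_natCast_atTop_atTop
      have h3 : Tendsto (fun m : ℕ => (1:ℝ)/((m:ℝ)+2)) atTop (𝓝 0) :=
        tendsto_const_nhds.div_atTop h2
      have h1 : Tendsto (fun m : ℕ => (1/((m:ℝ)+2)) * ρ) atTop (𝓝 0) := by
        simpa using h3.mul_const ρ
      exact h1.comp hφ.tendsto_atTop
  have : Tendsto (fun j => x (φ j) - T (x (φ j))) atTop (𝓝 (w - T w)) :=
    hconv.sub hTconv
  have hwT : w - T w = 0 := tendsto_nhds_unique this hdiff
  exact (sub_eq_zero.mp hwT).symm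


lemma sq_le_of_nonneg {a b : ℝ} (ha : 0 ≤ a) (hb : 0 ≤ b) (h : a ^ 2 ≤ b ^ 2) : a ≤ b := by
  nlinarith

lemma fejer_step (T : E → E)
    (hfne : ∀ x y : E, ‖T x - T y‖ ^ 2 ≤ inner ℝ (T x - T y) (x - y))
    (p : E) (hp : T p = p) (x : E) :
    ‖T x - p‖ ^ 2 + ‖T x - x‖ ^ 2 ≤ ‖x - p‖ ^ 2 := by
  have h1 := hfne x p
  rw [hp] at h1
  have h2 : ‖T x - x‖ ^ 2 = ‖(T x - p) - (x - p)‖ ^ 2 := by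
    rw [sub_sub_sub_cancel_right]
  rw [h2]
  nth_rewrite 2 [norm_sub_sq_real]
  linarith

lemma picard_converges (T : E → E)
    (hfne : ∀ x y : E, ‖T x - T y‖ ^ 2 ≤ inner ℝ (T x - T y) (x - y))
    (w : E) (hw : T w = w) (z0 : E) :
    ∃ w' : E, T w' = w' ∧ Tendsto (fun k => T^[k] z0) atTop (𝓝 w') := by
  set z : ℕ → E := fun k => T^[k] z0 with hz
  have hzs : ∀ k, z (k + 1) = T (z k) := fun k => Function.iterate_succ_apply' T k z0
  -- Fejér monotonicity with respect to any fixed point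
  have hkey : ∀ p, T p = p → ∀ k, ‖z (k+1) - p‖ ^ 2 + ‖z (k+1) - z k‖ ^ 2 ≤ ‖z k - p‖ ^ 2 := by
    intro p hp k
    rw [hzs k]
    exact fejer_step T hfne p hp (z k)
  have hmono : ∀ p, T p = p → ∀ k, ‖z (k+1) - p‖ ≤ ‖z k - p‖ := by
    intro p hp k
    have := hkey p hp k
    exact sq_le_of_nonneg (norm_nonneg _) (norm_nonneg _) (by nlinarith [sq_nonneg ‖z (k+1) - z k‖])
  -- the squared distances to w converge
  set β : ℕ → ℝ := fun k => ‖z k - w‖ ^ 2 with hβ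
  have hβanti : Antitone β := antitone_nat_of_succ_le fun k => by
    have := hkey w hw k
    simp only [hβ]
    nlinarith [sq_nonneg ‖z (k+1) - z k‖]
  have hβbdd : BddBelow (Set.range β) := ⟨0, by rintro u ⟨k, rfl⟩; positivity⟩
  have hβlim : Tendsto β atTop (𝓝 (⨅ k, β k)) := tendsto_atTop_ciInf hβanti hβbdd
  -- successive displacements tend to zero
  have hreg : Tendsto (fun k => ‖T (z k) - z k‖) atTop (𝓝 0) := by
    have hδ : Tendsto (fun k => ‖z (k+1) - z k‖ ^ 2) atTop (𝓝 0) := by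
      apply squeeze_zero (g := fun k => β k - β (k+1)) (fun k => by positivity)
        (fun k => by have := hkey w hw k; simp only [hβ]; nlinarith)
      have hs : Tendsto (fun k => β k - β (k+1)) atTop (𝓝 ((⨅ k, β k) - (⨅ k, β k))) :=
        hβlim.sub (hβlim.comp (tendsto_add_atTop_nat 1))
      simpa using hs
    have := (Real.continuous_sqrt.tendsto 0).comp hδ
    simp only [Function.comp_def, Real.sqrt_zero] at this
    refine Tendsto.congr (fun k => ?_) this
    rw [Real.sqrt_sq (norm_nonneg _), hzs k]
  -- a convergent subsequence
  have hmemball : ∀ k, z k ∈ Metric.closedBall w ‖z 0 - w‖ := by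
    intro k
    rw [Metric.mem_closedBall, dist_eq_norm]
    induction k with
    | zero => exact le_rfl
    | succ k ih => exact le_trans (hmono w hw k) ih
  obtain ⟨w', -, φ, hφ, hconv⟩ :=
    (isCompact_closedBall w ‖z 0 - w‖).tendsto_subseq hmemball
  have hTlip := fne_lipschitz T hfne
  have hfix : T w' = w' := by
    have h1 : Tendsto (fun j => T (z (φ j)) - z (φ j)) atTop (𝓝 (T w' - w')) :=
      ((hTlip.continuous.tendsto w').comp hconv).sub hconv
    have h2 : Tendsto (fun j => T (z (φ j)) - z (φ j)) atTop (𝓝 0) := by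
      apply squeeze_zero_norm (a := fun j => ‖T (z (φ j)) - z (φ j)‖) (fun j => le_refl _)
      exact hreg.comp hφ.tendsto_atTop
    have := tendsto_nhds_unique h1 h2
    exact sub_eq_zero.mp this
  refine ⟨w', hfix, ?_⟩
  -- distances to w' are antitone and have a subsequence tending to 0
  set c : ℕ → ℝ := fun k => ‖z k - w'‖ with hc
  have hcanti : Antitone c := antitone_nat_of_succ_le fun k => hmono w' hfix k
  have hcbdd : BddBelow (Set.range c) := ⟨0, by rintro u ⟨k, rfl⟩; positivity⟩
  have hclim : Tendsto c atTop (𝓝 (⨅ k, c k)) := tendsto_atTop_ciInf hcanti hcbdd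
  have hsub : Tendsto (fun j => c (φ j)) atTop (𝓝 0) := by
    have h0 : Tendsto (fun j => z (φ j) - w') atTop (𝓝 (w' - w')) :=
      hconv.sub tendsto_const_nhds
    rw [sub_self] at h0
    simpa using h0.norm
  have hinf : (⨅ k, c k) = 0 :=
    tendsto_nhds_unique (hclim.comp hφ.tendsto_atTop) hsub
  rw [hinf] at hclim
  rw [tendsto_iff_norm_sub_tendsto_zero]
  exact hclim

end PBaux

namespace PBaux

open scoped MatrixOrder in
lemma exists_sqrt_mat {n : ℕ} {S : Matrix (Fin n) (Fin n) ℝ} (hS : S.PosSemidef) :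
    ∃ R : Matrix (Fin n) (Fin n) ℝ, R.PosSemidef ∧ R * R = S :=
  ⟨CFC.sqrt S, Matrix.nonneg_iff_posSemidef.mp (CFC.sqrt_nonneg S),
    CFC.sqrt_mul_sqrt_self S (Matrix.nonneg_iff_posSemidef.mpr hS)⟩

lemma frob_bound {ι : Type*} [Fintype ι] (M : Matrix ι ι ℝ) (w : ι → ℝ) :
    M.mulVec w ⬝ᵥ M.mulVec w ≤ (∑ p, ∑ q, (M p q) ^ 2) * (w ⬝ᵥ w) := by
  have key : ∀ p, (M.mulVec w p) ^ 2 ≤ (∑ q, (M p q) ^ 2) * (w ⬝ᵥ w) := by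
    intro p
    have h := Finset.sum_mul_sq_le_sq_mul_sq Finset.univ (fun q => M p q) w
    calc (M.mulVec w p) ^ 2 = (∑ q, M p q * w q) ^ 2 := rfl
      _ ≤ (∑ q, (M p q) ^ 2) * (∑ q, (w q) ^ 2) := h
      _ = (∑ q, (M p q) ^ 2) * (w ⬝ᵥ w) := by simp [dotProduct, sq]
  calc M.mulVec w ⬝ᵥ M.mulVec w = ∑ p, (M.mulVec w p) ^ 2 := by simp [dotProduct, sq]
    _ ≤ ∑ p, (∑ q, (M p q) ^ 2) * (w ⬝ᵥ w) := Finset.sum_le_sum fun p _ => key p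
    _ = (∑ p, ∑ q, (M p q) ^ 2) * (w ⬝ᵥ w) := by rw [Finset.sum_mul]

lemma continuous_mulVec {ι : Type*} [Fintype ι] (M : Matrix ι ι ℝ) :
    Continuous (fun v : ι → ℝ => M.mulVec v) := by
  apply continuous_pi
  intro p
  simp only [Matrix.mulVec, dotProduct]
  exact continuous_finset_sum _ fun q _ => continuous_const.mul (continuous_apply q)

end PBaux

/-- Theorem 3, case 3: if `ν` is even, `P = Pᵀ`, `C` symmetric negative
definite with `−q_i Q ⪯ C`, then the Picard–Banach iteration of `A_{ν/2,ν/2}` produces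
estimates `(P^{ν/2} ⊗ I_n) z_k` converging to a fixed point of `A_ν`. -/
theorem picardBanach_halfAgg_converges {n N ν : ℕ} (hn : 0 < n) (hN : 0 < N) (hν : 0 < ν)
    (hνeven : Even ν)
    (X : Fin N → Set (Fin n → ℝ))
    (hXne : ∀ i, (X i).Nonempty) (hXconv : ∀ i, Convex ℝ (X i))
    (hXcpt : ∀ i, IsCompact (X i))
    (Q C : Matrix (Fin n) (Fin n) ℝ) (hQ : Q.PosDef)
    (q : Fin N → ℝ) (hq : ∀ i, 0 < q i) (c : Fin N → Fin n → ℝ)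
    (P : Matrix (Fin N) (Fin N) ℝ) (hPnn : ∀ i j, 0 ≤ P i j)
    (hPrs : ∀ i, ∑ j, P i j = 1) (hPsym : P.IsSymm)
    (hC : (-C).PosDef) (hqQC : ∀ i, (q i • Q + C).PosSemidef)
    (xstar : Fin N → (Fin n → ℝ) → (Fin n → ℝ))
    (hxstar : ∀ i, IsOptResp (X i) Q C (q i) (c i) (xstar i)) :
    ∀ z0 : Fin N × Fin n → ℝ, ∃ a : Fin N × Fin n → ℝ,
      aggMap P ν xstar a = a ∧
      Tendsto
        (fun k => ((P ^ (ν / 2)) ⊗ₖ (1 : Matrix (Fin n) (Fin n) ℝ)).mulVec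
          ((halfAgg P (ν / 2) xstar)^[k] z0))
        atTop (𝓝 a) := by
  intro z0
  obtain ⟨r, hr⟩ := hνeven
  set m : ℕ := ν / 2 with hmdef
  have hmm : m + m = ν := by omega
  -- symmetry facts
  have hQsym : Qᵀ = Q := by
    have h := hQ.1.eq
    rwa [Matrix.conjTranspose_eq_transpose_of_trivial] at h
  set S : Matrix (Fin n) (Fin n) ℝ := -C with hSdef
  have hS : S.PosDef := hC
  have hSsym : Sᵀ = S := by
    have h := hS.1.eq
    rwa [Matrix.conjTranspose_eq_transpose_of_trivial] at h
  -- square root of S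
  obtain ⟨R, hRpsd0, hRR0⟩ := PBaux.exists_sqrt_mat hS.posSemidef
  have hRpsd : R.PosSemidef := hRpsd0
  have hRsym : Rᵀ = R := by
    have h := hRpsd.1.eq
    rwa [Matrix.conjTranspose_eq_transpose_of_trivial] at h
  have hRR : R * R = S := hRR0
  have hRdetunit : IsUnit R.det := by
    have hdS : 0 < S.det := hS.det_pos
    have hmul : R.det * R.det = S.det := by rw [← Matrix.det_mul, hRR]
    refine isUnit_iff_ne_zero.mpr fun h0 => ?_
    rw [h0, mul_zero] at hmul
    linarith [hmul ▸ hdS]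
  have hRRinv : R * R⁻¹ = 1 := Matrix.mul_nonsing_inv R hRdetunit
  have hRinvR : R⁻¹ * R = 1 := Matrix.nonsing_inv_mul R hRdetunit
  -- big matrices
  set Kmat : Matrix (Fin N × Fin n) (Fin N × Fin n) ℝ :=
    (P ^ m) ⊗ₖ (1 : Matrix (Fin n) (Fin n) ℝ) with hKdef
  set L : Matrix (Fin N × Fin n) (Fin N × Fin n) ℝ :=
    (1 : Matrix (Fin N) (Fin N) ℝ) ⊗ₖ R with hLdef
  set Linv : Matrix (Fin N × Fin n) (Fin N × Fin n) ℝ :=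
    (1 : Matrix (Fin N) (Fin N) ℝ) ⊗ₖ R⁻¹ with hLinvdef
  set bigS : Matrix (Fin N × Fin n) (Fin N × Fin n) ℝ :=
    (1 : Matrix (Fin N) (Fin N) ℝ) ⊗ₖ S with hbigSdef
  have hLL : L * L = bigS := by
    rw [hLdef, hbigSdef, ← Matrix.mul_kronecker_mul, Matrix.one_mul, hRR]
  have hLLinv : L * Linv = 1 := by
    rw [hLdef, hLinvdef, ← Matrix.mul_kronecker_mul, Matrix.one_mul, hRRinv,
      Matrix.one_kronecker_one]
  have hLinvL : Linv * L = 1 := by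
    rw [hLdef, hLinvdef, ← Matrix.mul_kronecker_mul, Matrix.one_mul, hRinvR,
      Matrix.one_kronecker_one]
  have hKsym : Kmatᵀ = Kmat := by
    rw [hKdef, ← Matrix.kroneckerMap_transpose, hPsym.pow m, Matrix.transpose_one]
  have hLsym : Lᵀ = L := by
    rw [hLdef, ← Matrix.kroneckerMap_transpose, hRsym, Matrix.transpose_one]
  have hKbigS : Kmat * bigS = bigS * Kmat := by
    rw [hKdef, hbigSdef, ← Matrix.mul_kronecker_mul, ← Matrix.mul_kronecker_mul]
    simp only [Matrix.mul_one, Matrix.one_mul]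
  have hLK : L * Kmat = Kmat * L := by
    rw [hKdef, hLdef, ← Matrix.mul_kronecker_mul, ← Matrix.mul_kronecker_mul]
    simp only [Matrix.mul_one, Matrix.one_mul]
  -- scalar facts
  have hselfadj : ∀ u v : Fin N × Fin n → ℝ,
      Kmat.mulVec u ⬝ᵥ bigS.mulVec v = u ⬝ᵥ bigS.mulVec (Kmat.mulVec v) := by
    intro u v
    rw [PBaux.dot_mulVec_left, hKsym, Matrix.mulVec_mulVec, hKbigS, ← Matrix.mulVec_mulVec]
  have hLdot : ∀ u v : Fin N × Fin n → ℝ,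
      L.mulVec u ⬝ᵥ L.mulVec v = u ⬝ᵥ bigS.mulVec v := by
    intro u v
    rw [PBaux.dot_mulVec_left, hLsym, Matrix.mulVec_mulVec, hLL]
  have hPcol : ∀ j, ∑ i, P i j = 1 := by
    intro j
    have hentry : ∀ i j', P i j' = P j' i := by
      intro i j'
      conv_lhs => rw [← hPsym, Matrix.transpose_apply]
    calc ∑ i, P i j = ∑ i, P j i := Finset.sum_congr rfl fun i _ => hentry i j
      _ = 1 := hPrs j
  have hKnonexp : ∀ w : Fin N × Fin n → ℝ,
      Kmat.mulVec w ⬝ᵥ Kmat.mulVec w ≤ w ⬝ᵥ w := fun w =>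
    PBaux.kron_one_nonexp (P ^ m) (fun v => PBaux.pow_stoch_nonexp P hPnn hPrs hPcol m v) w
  have hKSnonexp : ∀ w : Fin N × Fin n → ℝ,
      Kmat.mulVec w ⬝ᵥ bigS.mulVec (Kmat.mulVec w) ≤ w ⬝ᵥ bigS.mulVec w := by
    intro w
    have h1 : L.mulVec (Kmat.mulVec w) = Kmat.mulVec (L.mulVec w) := by
      rw [Matrix.mulVec_mulVec, Matrix.mulVec_mulVec, hLK]
    calc Kmat.mulVec w ⬝ᵥ bigS.mulVec (Kmat.mulVec w)
        = L.mulVec (Kmat.mulVec w) ⬝ᵥ L.mulVec (Kmat.mulVec w) := (hLdot _ _).symm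
      _ = Kmat.mulVec (L.mulVec w) ⬝ᵥ Kmat.mulVec (L.mulVec w) := by rw [h1]
      _ ≤ L.mulVec w ⬝ᵥ L.mulVec w := hKnonexp _
      _ = w ⬝ᵥ bigS.mulVec w := hLdot _ _
  -- firm nonexpansiveness of the stacked best-response map
  have hFfne : ∀ w1 w2 : Fin N × Fin n → ℝ,
      (extMap xstar w1 - extMap xstar w2) ⬝ᵥ
          bigS.mulVec (extMap xstar w1 - extMap xstar w2)
        ≤ (extMap xstar w1 - extMap xstar w2) ⬝ᵥ bigS.mulVec (w1 - w2) := by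
    intro w1 w2
    rw [hbigSdef, PBaux.blockDot, PBaux.blockDot]
    apply Finset.sum_le_sum
    intro i _
    have hslice1 : (fun j => (extMap xstar w1 - extMap xstar w2) (i, j))
        = xstar i (fun j => w1 (i, j)) - xstar i (fun j => w2 (i, j)) := rfl
    have hslice2 : (fun j => (w1 - w2) (i, j))
        = (fun j => w1 (i, j)) - (fun j => w2 (i, j)) := rfl
    rw [hslice1, hslice2]
    exact PBaux.block_fne (hXconv i) hQsym hQ.posSemidef (hq i) (hqQC i) (c i)
      (hxstar i) _ _
  -- bridges to the Euclidean space
  have fact2 : ∀ u : EuclideanSpace ℝ (Fin N × Fin n), ‖u‖ ^ 2 = u ⬝ᵥ u := by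
    intro u
    rw [EuclideanSpace.norm_eq, Real.sq_sqrt (by positivity)]
    refine Finset.sum_congr rfl fun i _ => ?_
    rw [Real.norm_eq_abs, sq_abs, sq]
  have fact1 : ∀ u v : EuclideanSpace ℝ (Fin N × Fin n), (inner ℝ u v : ℝ) = u ⬝ᵥ v := by
    intro u v
    rw [PiLp.inner_apply]
    simp [RCLike.inner_apply, dotProduct]
    exact Finset.sum_congr rfl fun _ _ => mul_comm _ _
  -- the conjugated half-aggregation map
  set ψ : (Fin N × Fin n → ℝ) → EuclideanSpace ℝ (Fin N × Fin n) :=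
    fun v => WithLp.toLp 2 (L.mulVec v) with hψdef
  set T : EuclideanSpace ℝ (Fin N × Fin n) → EuclideanSpace ℝ (Fin N × Fin n) :=
    fun u => ψ (halfAgg P m xstar (Linv.mulVec u)) with hTdef
  have hHz : ∀ z : Fin N × Fin n → ℝ,
      halfAgg P m xstar z = Kmat.mulVec (extMap xstar (Kmat.mulVec z)) := fun z => rfl
  have hTfne : ∀ u1 u2, ‖T u1 - T u2‖ ^ 2 ≤ inner ℝ (T u1 - T u2) (u1 - u2) := by
    intro u1 u2
    have hTsub : T u1 - T u2 = ψ (halfAgg P m xstar (Linv.mulVec u1)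
        - halfAgg P m xstar (Linv.mulVec u2)) := by
      show ψ _ - ψ _ = ψ _
      rw [hψdef]
      simp only
      rw [Matrix.mulVec_sub, WithLp.toLp_sub]
    have hu12 : (u1 - u2 : EuclideanSpace ℝ (Fin N × Fin n))
        = WithLp.toLp 2 (L.mulVec (Linv.mulVec u1 - Linv.mulVec u2)) := by
      rw [← Matrix.mulVec_sub, Matrix.mulVec_mulVec, hLLinv, Matrix.one_mulVec, WithLp.toLp_sub,
        WithLp.toLp_ofLp, WithLp.toLp_ofLp]
    rw [hTsub, fact2, fact1, hu12, hψdef]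
    simp only [WithLp.ofLp_toLp]
    rw [hLdot, hLdot]
    have hD : halfAgg P m xstar (Linv.mulVec u1) - halfAgg P m xstar (Linv.mulVec u2)
        = Kmat.mulVec (extMap xstar (Kmat.mulVec (Linv.mulVec u1))
            - extMap xstar (Kmat.mulVec (Linv.mulVec u2))) := by
      rw [Matrix.mulVec_sub, hHz, hHz]
    rw [hD]
    calc Kmat.mulVec _ ⬝ᵥ bigS.mulVec (Kmat.mulVec _)
        ≤ (extMap xstar (Kmat.mulVec (Linv.mulVec u1))
            - extMap xstar (Kmat.mulVec (Linv.mulVec u2))) ⬝ᵥ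
          bigS.mulVec (extMap xstar (Kmat.mulVec (Linv.mulVec u1))
            - extMap xstar (Kmat.mulVec (Linv.mulVec u2))) := hKSnonexp _
      _ ≤ (extMap xstar (Kmat.mulVec (Linv.mulVec u1))
            - extMap xstar (Kmat.mulVec (Linv.mulVec u2))) ⬝ᵥ
          bigS.mulVec (Kmat.mulVec (Linv.mulVec u1) - Kmat.mulVec (Linv.mulVec u2)) :=
        hFfne _ _
      _ = (extMap xstar (Kmat.mulVec (Linv.mulVec u1))
            - extMap xstar (Kmat.mulVec (Linv.mulVec u2))) ⬝ᵥ
          bigS.mulVec (Kmat.mulVec (Linv.mulVec u1 - Linv.mulVec u2)) := by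
        rw [← Matrix.mulVec_sub]
      _ = Kmat.mulVec (extMap xstar (Kmat.mulVec (Linv.mulVec u1))
            - extMap xstar (Kmat.mulVec (Linv.mulVec u2))) ⬝ᵥ
          bigS.mulVec (Linv.mulVec u1 - Linv.mulVec u2) := (hselfadj _ _).symm
  -- boundedness of the range of T
  have hrad : ∀ i, ∃ rr : ℝ, ∀ x ∈ X i, ‖x‖ ≤ rr := by
    intro i
    obtain ⟨rr, hrr⟩ := (hXcpt i).isBounded.subset_closedBall 0
    exact ⟨rr, fun x hx => by simpa [Metric.mem_closedBall, dist_zero_right] using hrr hx⟩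
  choose rad hradX using hrad
  have hFbound : ∀ w : Fin N × Fin n → ℝ,
      extMap xstar w ⬝ᵥ extMap xstar w ≤ ∑ p : Fin N × Fin n, (max (rad p.1) 0) ^ 2 := by
    intro w
    simp only [dotProduct]
    apply Finset.sum_le_sum
    intro p _
    have hmem := (hxstar p.1 (fun j => w (p.1, j))).1
    have h1 : |extMap xstar w p| ≤ max (rad p.1) 0 := by
      have h2 : ‖extMap xstar w p‖ ≤ ‖xstar p.1 (fun j => w (p.1, j))‖ :=
        norm_le_pi_norm (xstar p.1 (fun j => w (p.1, j))) p.2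
      have h3 := hradX p.1 _ hmem
      rw [Real.norm_eq_abs] at h2
      exact le_trans (le_trans h2 h3) (le_max_left _ _)
    calc extMap xstar w p * extMap xstar w p = |extMap xstar w p| * |extMap xstar w p| :=
          (abs_mul_abs_self _).symm
      _ ≤ (max (rad p.1) 0) * (max (rad p.1) 0) :=
          mul_le_mul h1 h1 (abs_nonneg _) (le_max_right _ _)
      _ = (max (rad p.1) 0) ^ 2 := (sq _).symm
  set B : ℝ := ∑ p : Fin N × Fin n, (max (rad p.1) 0) ^ 2 with hBdef
  have hB0 : 0 ≤ B := Finset.sum_nonneg fun p _ => sq_nonneg _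
  set frob : ℝ := ∑ p, ∑ q', ((L * Kmat) p q') ^ 2 with hfrobdef
  have hfrob0 : 0 ≤ frob := Finset.sum_nonneg fun p _ => Finset.sum_nonneg fun q' _ => sq_nonneg _
  have hTbound : ∀ u, ‖T u‖ ≤ Real.sqrt (frob * B) := by
    intro u
    have h1 : ‖T u‖ ^ 2 = T u ⬝ᵥ T u := fact2 _
    have h2 : T u = (L * Kmat).mulVec
        (extMap xstar (Kmat.mulVec (Linv.mulVec u))) := by
      rw [hTdef]
      simp only
      rw [hψdef]
      simp only
      rw [hHz, Matrix.mulVec_mulVec]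
    have h3 : ‖T u‖ ^ 2 ≤ frob * B := by
      rw [h1, h2]
      calc (L * Kmat).mulVec _ ⬝ᵥ (L * Kmat).mulVec _
          ≤ frob * (extMap xstar (Kmat.mulVec (Linv.mulVec u)) ⬝ᵥ
              extMap xstar (Kmat.mulVec (Linv.mulVec u))) := PBaux.frob_bound _ _
        _ ≤ frob * B := mul_le_mul_of_nonneg_left (hFbound _) hfrob0
    calc ‖T u‖ = Real.sqrt (‖T u‖ ^ 2) := (Real.sqrt_sq (norm_nonneg _)).symm
      _ ≤ Real.sqrt (frob * B) := Real.sqrt_le_sqrt h3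
  -- fixed point and convergence
  obtain ⟨w0, hw0⟩ := PBaux.exists_fixed_of_bounded T (PBaux.fne_lipschitz T hTfne) _ hTbound
  obtain ⟨w', hfix', hconv⟩ := PBaux.picard_converges T hTfne w0 hw0 (ψ z0)
  have hiter : ∀ k, T^[k] (ψ z0) = ψ ((halfAgg P m xstar)^[k] z0) := by
    intro k
    induction k with
    | zero => rfl
    | succ k ih =>
        rw [Function.iterate_succ_apply', ih, Function.iterate_succ_apply']
        show ψ (halfAgg P m xstar (Linv.mulVec (L.mulVec ((halfAgg P m xstar)^[k] z0)))) = _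
        rw [Matrix.mulVec_mulVec, hLinvL, Matrix.one_mulVec]
  have hHzbar : halfAgg P m xstar (Linv.mulVec w') = Linv.mulVec w' := by
    have h1 : ψ (halfAgg P m xstar (Linv.mulVec w')) = w' := hfix'
    have h1' : L.mulVec (halfAgg P m xstar (Linv.mulVec w')) = w' := congrArg WithLp.ofLp h1
    have h2 := congrArg Linv.mulVec h1'
    rwa [Matrix.mulVec_mulVec, hLinvL, Matrix.one_mulVec] at h2
  refine ⟨Kmat.mulVec (Linv.mulVec w'), ?_, ?_⟩
  · -- fixed point of aggMap
    have hKK : (P ^ ν) ⊗ₖ (1 : Matrix (Fin n) (Fin n) ℝ) = Kmat * Kmat := by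
      rw [hKdef, ← Matrix.mul_kronecker_mul, ← pow_add, hmm]
      simp only [Matrix.one_mul]
    show ((P ^ ν) ⊗ₖ (1 : Matrix (Fin n) (Fin n) ℝ)).mulVec
        (extMap xstar (Kmat.mulVec (Linv.mulVec w'))) = Kmat.mulVec (Linv.mulVec w')
    rw [hKK, ← Matrix.mulVec_mulVec]
    rw [show Kmat.mulVec (extMap xstar (Kmat.mulVec (Linv.mulVec w')))
        = halfAgg P m xstar (Linv.mulVec w') from rfl, hHzbar]
  · -- convergence
    set G : EuclideanSpace ℝ (Fin N × Fin n) → (Fin N × Fin n → ℝ) :=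
      fun u => (Kmat * Linv).mulVec u with hGdef
    have hGcont : Continuous G := by
      have h1 : Continuous (fun u : EuclideanSpace ℝ (Fin N × Fin n) =>
          (WithLp.equiv 2 (Fin N × Fin n → ℝ)) u) := PiLp.continuous_ofLp _ _
      exact (PBaux.continuous_mulVec (Kmat * Linv)).comp h1
    have hGk : ∀ k, G (T^[k] (ψ z0)) = Kmat.mulVec ((halfAgg P m xstar)^[k] z0) := by
      intro k
      rw [hiter k]
      show (Kmat * Linv).mulVec (L.mulVec _) = _
      rw [Matrix.mulVec_mulVec, Matrix.mul_assoc, hLinvL, Matrix.mul_one]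
    have hGw : G w' = Kmat.mulVec (Linv.mulVec w') := by
      show (Kmat * Linv).mulVec w' = _
      rw [← Matrix.mulVec_mulVec]
    have := ((hGcont.tendsto w').comp hconv).congr hGk
    rwa [hGw] at this
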